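/- If π ∈ S_n has pinnacle set P = {p_1 < p_2 < ⋯ < p_ℓ} (with ℓ ≥ 1) and vale set V, then N_{PV}(p_ℓ) = 2, where p_ℓ is the largest pinnacle. -/

import Mathlib

/-- The extended one-line word of `w`, read 1-indexed, with the boundary
convention `π₀ = π_{n+1} = ∞`. -/
def ext (w : List ℕ) (i : ℕ) : ℕ∞ :=
  if 1 ≤ i ∧ i ≤ w.length then (w.getD (i - 1) 0 : ℕ∞) else ⊤

/-- The pinnacle set of the word `w`: values `π_i` with `π_{i-1} < π_i > π_{i+1}`. -/
def pinnSet (w : List ℕ) : Finset ℕ :=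
  ((Finset.Icc 1 w.length).filter fun i =>
      ext w (i - 1) < ext w i ∧ ext w (i + 1) < ext w i).image fun i => w.getD (i - 1) 0

/-- The vale set of the word `w`: values `π_i` with `π_{i-1} > π_i < π_{i+1}`. -/
def valeSet (w : List ℕ) : Finset ℕ :=
  ((Finset.Icc 1 w.length).filter fun i =>
      ext w i < ext w (i - 1) ∧ ext w i < ext w (i + 1)).image fun i => w.getD (i - 1) 0

/-- `w` is the one-line notation of a permutation of `[n] = {1, …, n}`. -/
def IsPermOf (n : ℕ) (w : List ℕ) : Prop := w.Perm (List.range' 1 n)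

/-- `w₁` in the `x`-factorization `w = w₁ w₂ x w₄ w₅`. -/
def fsW1 (x : ℕ) (w : List ℕ) : List ℕ :=
  ((w.take (w.idxOf x)).reverse.dropWhile fun a => decide (a < x)).reverse

/-- `w₂` in the `x`-factorization: the longest contiguous subword immediately to the
left of `x` all of whose letters are smaller than `x`. -/
def fsW2 (x : ℕ) (w : List ℕ) : List ℕ :=
  ((w.take (w.idxOf x)).reverse.takeWhile fun a => decide (a < x)).reverse

/-- `w₄` in the `x`-factorization: the longest contiguous subword immediately to the
right of `x` all of whose letters are smaller than `x`. -/
def fsW4 (x : ℕ) (w : List ℕ) : List ℕ :=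
  (w.drop (w.idxOf x + 1)).takeWhile fun a => decide (a < x)

/-- `w₅` in the `x`-factorization `w = w₁ w₂ x w₄ w₅`. -/
def fsW5 (x : ℕ) (w : List ℕ) : List ℕ :=
  (w.drop (w.idxOf x + 1)).dropWhile fun a => decide (a < x)

/-- The dual Foata–Strehl map `φ_x : w₁ w₂ x w₄ w₅ ↦ w₁ w₄ x w₂ w₅`. -/
def dualFS (x : ℕ) (w : List ℕ) : List ℕ :=
  if x ∈ w then fsW1 x w ++ fsW4 x w ++ [x] ++ fsW2 x w ++ fsW5 x w else w

/-- The dual Foata–Strehl map `φ_S` for a set `S`, i.e. the composition of the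
(commuting) maps `φ_x` over `x ∈ S`. -/
noncomputable def dualFSFinset (S : Finset ℕ) (w : List ℕ) : List ℕ :=
  S.toList.foldr dualFS w

/-- The largest letter of a word, with `wmax [] = 0`. -/
def wmax (w : List ℕ) : ℕ := w.foldr max 0

/-- The subword of `w` consisting of the letters lying in `A`. -/
def restrictTo (w : List ℕ) (A : Finset ℕ) : List ℕ :=
  w.filter fun a => decide (a ∈ A)

/-- `N_{PV}(k) = |V_k| - |P_k|` (natural subtraction). -/
def nPV (P V : Finset ℕ) (k : ℕ) : ℕ :=
  (V.filter fun v => v < k).card - (P.filter fun p => p < k).card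

/-- `N_{PV}(k) = |V_k| - |P_k|` as an integer. -/
def nPVZ (P V : Finset ℕ) (k : ℕ) : ℤ :=
  ((V.filter fun v => v < k).card : ℤ) - ((P.filter fun p => p < k).card : ℤ)

/-- `(P, V)` is admissible: some permutation of `[n]` has pinnacle set `P` and
vale set `V`. -/
def AdmissiblePair (n : ℕ) (P V : Finset ℕ) : Prop :=
  ∃ w : List ℕ, IsPermOf n w ∧ pinnSet w = P ∧ valeSet w = V

open Classical in
/-- `𝒱(P)`: the collection of all vale sets `V` for which `(P, V)` is admissible. -/
noncomputable def valeSetsOf (n : ℕ) (P : Finset ℕ) : Finset (Finset ℕ) :=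
  ((Finset.Icc 1 n).powerset).filter fun V => AdmissiblePair n P V

/-- `w` is FS-minimal: it has no double descents (with the `∞` boundary convention),
and for each pinnacle `p`, the `p`-factorization of the restriction of `w` to its
pinnacles and vales satisfies `max w₂ < max w₄`. -/
def FSMinimal (w : List ℕ) : Prop :=
  (∀ i ∈ Finset.Icc 1 w.length,
      ¬(ext w i < ext w (i - 1) ∧ ext w (i + 1) < ext w i)) ∧
  ∀ p ∈ pinnSet w,
    wmax (fsW2 p (restrictTo w (pinnSet w ∪ valeSet w))) <
      wmax (fsW4 p (restrictTo w (pinnSet w ∪ valeSet w)))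

/-- A `PV`-arrangement: a word listing each element of `P ∪ V` exactly once,
with pinnacle set `P` and vale set `V`. -/
def IsPVArrangement (P V : Finset ℕ) (α : List ℕ) : Prop :=
  α.Nodup ∧ α.toFinset = P ∪ V ∧ pinnSet α = P ∧ valeSet α = V

/-- A word is canonical (for pinnacle set `P`) if for each `p ∈ P` its
`p`-factorization satisfies `max w₂ < max w₄`. -/
def IsCanonical (P : Finset ℕ) (α : List ℕ) : Prop :=
  ∀ p ∈ P, wmax (fsW2 p α) < wmax (fsW4 p α)

/-- The number of descents of `w`: indices `j ∈ [n-1]` with `π_j > π_{j+1}`. -/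
def descentCount (w : List ℕ) : ℕ :=
  ((Finset.Icc 1 (w.length - 1)).filter fun j => w.getD j 0 < w.getD (j - 1) 0).card

/-- The original Foata–Strehl map `φ'_x`, defined like `φ_x` but with the words
`w₂, w₄` consisting of letters GREATER than `x`. -/
def origFS (x : ℕ) (w : List ℕ) : List ℕ :=
  if x ∈ w then
    ((w.take (w.idxOf x)).reverse.dropWhile fun a => decide (x < a)).reverse
      ++ ((w.drop (w.idxOf x + 1)).takeWhile fun a => decide (x < a)) ++ [x]
      ++ ((w.take (w.idxOf x)).reverse.takeWhile fun a => decide (x < a)).reverse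
      ++ ((w.drop (w.idxOf x + 1)).dropWhile fun a => decide (x < a))
  else w

/-- `C(l)`: weak compositions `(t₁, …, t_l)` of `l` with `t₁ + ⋯ + t_k ≥ k` for all `k`. -/
def weakComps (l : ℕ) : Finset (Fin l → ℕ) :=
  (Fintype.piFinset fun _ : Fin l => Finset.range (l + 1)).filter fun t =>
    (∑ i, t i) = l ∧ ∀ k : Fin l, (k : ℕ) + 1 ≤ ∑ i ∈ Finset.univ.filter (fun j => j ≤ k), t i

/-- `g_{i+1} = |G_{i+1}|`, the size of the `(i+1)`-st gap set
`G_{i+1} = {j ∈ [n] \ P : p_i < j < p_{i+1}}` (0-indexed `i`, with `p₀ = 1`). -/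
def gapCard (n : ℕ) (P : Finset ℕ) (i : ℕ) : ℕ :=
  (((Finset.Icc 1 n) \ P).filter fun j =>
      (if i = 0 then 1 else (P.sort (· ≤ ·)).getD (i - 1) 0) < j ∧
        j < (P.sort (· ≤ ·)).getD i 0).card

lemma ext_of_mem {w : List ℕ} {i : ℕ} (h1 : 1 ≤ i) (h2 : i ≤ w.length) :
    ext w i = ((w.getD (i - 1) 0 : ℕ) : ℕ∞) := by
  simp [ext, h1, h2]

lemma ext_of_mem' {w : List ℕ} {i : ℕ} (h1 : 1 ≤ i) (h2 : i ≤ w.length) :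
    ext w i = (w[i-1]'(by omega) : ℕ∞) := by
  rw [ext_of_mem h1 h2, List.getD_eq_getElem w 0 (by omega)]

lemma ext_of_not {w : List ℕ} {i : ℕ} (h : ¬(1 ≤ i ∧ i ≤ w.length)) : ext w i = ⊤ := by
  simp [ext, h]

lemma ext_zero (w : List ℕ) : ext w 0 = ⊤ := ext_of_not (by omega)

lemma ext_lt_top {w : List ℕ} {i : ℕ} (h1 : 1 ≤ i) (h2 : i ≤ w.length) : ext w i < ⊤ := by
  rw [ext_of_mem h1 h2]; exact lt_top_iff_ne_top.2 (by simp)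

lemma adj_ne {w : List ℕ} (hw : w.Nodup) (hn : 1 ≤ w.length) {j : ℕ} (hj : j ≤ w.length) :
    ext w j ≠ ext w (j + 1) := by
  rcases Nat.eq_zero_or_pos j with rfl | hj1
  · rw [ext_zero]
    exact fun h => absurd h.symm (ne_top_of_lt (ext_lt_top le_rfl hn))
  rcases eq_or_lt_of_le hj with rfl | hjlt
  · rw [ext_of_not (i := w.length + 1) (by omega)]
    exact ne_top_of_lt (ext_lt_top hj1 hj)
  · rw [ext_of_mem' hj1 hj, ext_of_mem' (by omega) (by omega)]
    intro h
    have := (List.Nodup.getElem_inj_iff hw).1 (by exact_mod_cast h)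
    omega

def pIdx (w : List ℕ) : Finset ℕ :=
  (Finset.Icc 1 w.length).filter fun i => ext w (i - 1) < ext w i ∧ ext w (i + 1) < ext w i

def vIdx (w : List ℕ) : Finset ℕ :=
  (Finset.Icc 1 w.length).filter fun i => ext w i < ext w (i - 1) ∧ ext w i < ext w (i + 1)

open Classical in
lemma card_vIdx_pIdx {w : List ℕ} (hw : w.Nodup) (hn : 1 ≤ w.length) :
    ((vIdx w).card : ℤ) = (pIdx w).card + 1 := by
  classical
  set n := w.length with hnw
  set f : ℕ → ℤ := fun i => if ext w i < ext w (i + 1) then 1 else 0 with hf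
  have key : ∀ i ∈ Finset.range n,
      ((if ext w (i+1) < ext w i ∧ ext w (i+1) < ext w (i+2) then (1:ℤ) else 0)
        - (if ext w i < ext w (i+1) ∧ ext w (i+2) < ext w (i+1) then (1:ℤ) else 0))
      = f (i+1) - f i := by
    intro i hi
    rw [Finset.mem_range] at hi
    have h1 := adj_ne hw hn (j := i) (by omega)
    have h2 := adj_ne hw hn (j := i+1) (by omega)
    simp only [hf]
    rcases (Ne.lt_or_gt h1) with hL | hL <;> rcases (Ne.lt_or_gt h2) with hR | hR <;>
      simp [hL, hR, not_lt.2 hL.le, not_lt.2 hR.le, lt_asymm hL, lt_asymm hR]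
  have hsum := Finset.sum_congr rfl key
  rw [Finset.sum_sub_distrib, Finset.sum_range_sub f n] at hsum
  have hf0 : f 0 = 0 := by simp [hf, ext_zero]
  have hfn : f n = 1 := by
    have : ext w (n+1) = ⊤ := ext_of_not (by omega)
    simp [hf, this, ext_lt_top hn (le_refl n)]
  rw [hf0, hfn] at hsum
  have hv : ((vIdx w).card : ℤ) = ∑ i ∈ Finset.range n,
      (if ext w (i+1) < ext w i ∧ ext w (i+1) < ext w (i+2) then (1:ℤ) else 0) := by
    rw [vIdx, Finset.card_filter]
    push_cast
    rw [← Finset.Ico_add_one_right_eq_Icc, Finset.sum_Ico_eq_sum_range]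
    simp only [Nat.add_sub_cancel_left]
    apply Finset.sum_congr rfl
    intro i _
    rw [Nat.add_comm 1 i]
  have hp : ((pIdx w).card : ℤ) = ∑ i ∈ Finset.range n,
      (if ext w i < ext w (i+1) ∧ ext w (i+2) < ext w (i+1) then (1:ℤ) else 0) := by
    rw [pIdx, Finset.card_filter]
    push_cast
    rw [← Finset.Ico_add_one_right_eq_Icc, Finset.sum_Ico_eq_sum_range]
    simp only [Nat.add_sub_cancel_left]
    apply Finset.sum_congr rfl
    intro i _
    rw [Nat.add_comm 1 i]
  rw [← hv, ← hp] at hsum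
  omega

lemma ext_cons_succ (a : ℕ) (t : List ℕ) {j : ℕ} (hj : 1 ≤ j) :
    ext (a :: t) (j + 1) = ext t j := by
  obtain ⟨k, rfl⟩ : ∃ k, j = k + 1 := ⟨j - 1, by omega⟩
  by_cases hk : k + 1 ≤ t.length
  · rw [ext_of_mem (by omega) (by simp only [List.length_cons]; omega), ext_of_mem (by omega) hk]
    exact_mod_cast (List.getD_cons_succ : (a :: t).getD (k + 1) 0 = t.getD k 0)
  · have h1 : ext (a :: t) (k + 1 + 1) = ⊤ :=
      ext_of_not (by simp only [List.length_cons]; omega)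
    have h2 : ext t (k + 1) = ⊤ := ext_of_not (by omega)
    rw [h1, h2]

lemma ext_cons_one (a : ℕ) (t : List ℕ) : ext (a :: t) 1 = (a : ℕ∞) := by
  rw [ext_of_mem le_rfl (by simp)]
  congr 1

lemma ext_one {t : List ℕ} (hL : 1 ≤ t.length) : ext t 1 = ((t.getD 0 0 : ℕ) : ℕ∞) :=
  ext_of_mem le_rfl hL

lemma getD_mem {t : List ℕ} {k : ℕ} (hk : k < t.length) : t.getD k 0 ∈ t := by
  rw [List.getD_eq_getElem _ _ hk]; exact List.getElem_mem hk

lemma pinn_cons {a : ℕ} {t : List ℕ} (ht : t ≠ []) (hmax : ∀ x ∈ t, x < a) :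
    pinnSet (a :: t) = pinnSet t := by
  have hL : 1 ≤ t.length := List.length_pos_iff.2 ht
  ext x
  simp only [pinnSet, Finset.mem_image, Finset.mem_filter, Finset.mem_Icc, List.length_cons]
  constructor
  · rintro ⟨i, ⟨⟨hi1, hi2⟩, hp1, hp2⟩, rfl⟩
    have hi3 : 3 ≤ i := by
      by_contra hlt
      rcases (by omega : i = 1 ∨ i = 2) with rfl | rfl
      · rw [show (1:ℕ) - 1 = 0 from rfl, ext_zero] at hp1
        exact not_top_lt hp1
      · rw [show (2:ℕ) - 1 = 1 from rfl, ext_cons_one,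
          ext_cons_succ a t (j := 1) le_rfl, ext_one hL] at hp1
        have h2 := hmax _ (getD_mem (k := 0) hL)
        have h3 : a < t.getD 0 0 := by exact_mod_cast hp1
        omega
    obtain ⟨k, rfl⟩ : ∃ k, i = k + 3 := ⟨i - 3, by omega⟩
    refine ⟨k + 2, ⟨⟨by omega, by omega⟩, ?_, ?_⟩, ?_⟩
    · show ext t (k + 1) < ext t (k + 2)
      rw [← ext_cons_succ a t (by omega : 1 ≤ k + 1), ← ext_cons_succ a t (by omega : 1 ≤ k + 2)]
      exact hp1
    · show ext t (k + 3) < ext t (k + 2)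
      rw [← ext_cons_succ a t (by omega : 1 ≤ k + 3), ← ext_cons_succ a t (by omega : 1 ≤ k + 2)]
      exact hp2
    · show t.getD (k + 1) 0 = (a :: t).getD (k + 2) 0
      exact List.getD_cons_succ.symm
  · rintro ⟨j, ⟨⟨hj1, hj2⟩, hp1, hp2⟩, rfl⟩
    have hj3 : 2 ≤ j := by
      by_contra hlt
      have : j = 1 := by omega
      subst this
      rw [show (1:ℕ) - 1 = 0 from rfl, ext_zero] at hp1
      exact not_top_lt hp1
    obtain ⟨k, rfl⟩ : ∃ k, j = k + 2 := ⟨j - 2, by omega⟩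
    refine ⟨k + 3, ⟨⟨by omega, by omega⟩, ?_, ?_⟩, ?_⟩
    · show ext (a :: t) ((k + 1) + 1) < ext (a :: t) ((k + 2) + 1)
      rw [ext_cons_succ a t (by omega : 1 ≤ k + 1), ext_cons_succ a t (by omega : 1 ≤ k + 2)]
      exact hp1
    · show ext (a :: t) ((k + 3) + 1) < ext (a :: t) ((k + 2) + 1)
      rw [ext_cons_succ a t (by omega : 1 ≤ k + 3), ext_cons_succ a t (by omega : 1 ≤ k + 2)]
      exact hp2
    · show (a :: t).getD (k + 2) 0 = t.getD (k + 1) 0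
      exact List.getD_cons_succ

lemma vale_cons {a : ℕ} {t : List ℕ} (ht : t ≠ []) (hmax : ∀ x ∈ t, x < a) :
    valeSet (a :: t) = valeSet t := by
  have hL : 1 ≤ t.length := List.length_pos_iff.2 ht
  have hext1 : ext (a :: t) 2 = ext t 1 := ext_cons_succ a t le_rfl
  ext x
  simp only [valeSet, Finset.mem_image, Finset.mem_filter, Finset.mem_Icc, List.length_cons]
  constructor
  · rintro ⟨i, ⟨⟨hi1, hi2⟩, hv1, hv2⟩, rfl⟩
    have hne1 : i ≠ 1 := by
      rintro rfl
      rw [ext_cons_one, hext1, ext_one hL] at hv2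
      have h2 := hmax _ (getD_mem (k := 0) hL)
      have h3 : a < t.getD 0 0 := by exact_mod_cast hv2
      omega
    rcases (by omega : i = 2 ∨ 3 ≤ i) with rfl | hi3
    · refine ⟨1, ⟨⟨le_rfl, hL⟩, ?_, ?_⟩, ?_⟩
      · show ext t 1 < ext t 0
        rw [ext_zero]; exact ext_lt_top le_rfl hL
      · show ext t 1 < ext t 2
        rw [← hext1, ← ext_cons_succ a t (by omega : 1 ≤ 2)]
        exact hv2
      · show t.getD 0 0 = (a :: t).getD 1 0
        exact (List.getD_cons_succ).symm
    · obtain ⟨k, rfl⟩ : ∃ k, i = k + 3 := ⟨i - 3, by omega⟩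
      refine ⟨k + 2, ⟨⟨by omega, by omega⟩, ?_, ?_⟩, ?_⟩
      · show ext t (k + 2) < ext t (k + 1)
        rw [← ext_cons_succ a t (by omega : 1 ≤ k + 1), ← ext_cons_succ a t (by omega : 1 ≤ k + 2)]
        exact hv1
      · show ext t (k + 2) < ext t (k + 3)
        rw [← ext_cons_succ a t (by omega : 1 ≤ k + 3), ← ext_cons_succ a t (by omega : 1 ≤ k + 2)]
        exact hv2
      · show t.getD (k + 1) 0 = (a :: t).getD (k + 2) 0
        exact List.getD_cons_succ.symm
  · rintro ⟨j, ⟨⟨hj1, hj2⟩, hv1, hv2⟩, rfl⟩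
    rcases (by omega : j = 1 ∨ 2 ≤ j) with rfl | hj3
    · refine ⟨2, ⟨⟨by omega, by omega⟩, ?_, ?_⟩, ?_⟩
      · show ext (a :: t) 2 < ext (a :: t) 1
        rw [ext_cons_one, hext1, ext_one hL]
        have h2 := hmax _ (getD_mem (k := 0) hL)
        exact_mod_cast h2
      · show ext (a :: t) (1 + 1) < ext (a :: t) (2 + 1)
        rw [ext_cons_succ a t (by omega : 1 ≤ 1), ext_cons_succ a t (by omega : 1 ≤ 2)]
        exact hv2
      · show (a :: t).getD 1 0 = t.getD 0 0
        exact List.getD_cons_succ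
    · obtain ⟨k, rfl⟩ : ∃ k, j = k + 2 := ⟨j - 2, by omega⟩
      refine ⟨k + 3, ⟨⟨by omega, by omega⟩, ?_, ?_⟩, ?_⟩
      · show ext (a :: t) ((k + 2) + 1) < ext (a :: t) ((k + 1) + 1)
        rw [ext_cons_succ a t (by omega : 1 ≤ k + 2), ext_cons_succ a t (by omega : 1 ≤ k + 1)]
        exact hv1
      · show ext (a :: t) ((k + 2) + 1) < ext (a :: t) ((k + 3) + 1)
        rw [ext_cons_succ a t (by omega : 1 ≤ k + 2), ext_cons_succ a t (by omega : 1 ≤ k + 3)]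
        exact hv2
      · show (a :: t).getD (k + 2) 0 = t.getD (k + 1) 0
        exact List.getD_cons_succ

lemma getD_append' {t : List ℕ} (a : ℕ) {n : ℕ} (h : n < t.length) :
    (t ++ [a]).getD n 0 = t.getD n 0 := by
  rw [List.getD_eq_getElem _ _ (by simp; omega), List.getD_eq_getElem _ _ h,
    List.getElem_append_left h]

lemma ext_concat {a : ℕ} {t : List ℕ} {j : ℕ} (hj : j ≤ t.length) :
    ext (t ++ [a]) j = ext t j := by
  rcases Nat.eq_zero_or_pos j with rfl | hj1
  · rw [ext_zero, ext_zero]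
  · rw [ext_of_mem hj1 (by simp only [List.length_append, List.length_singleton]; omega),
      ext_of_mem hj1 hj, getD_append' a (by omega)]

lemma ext_concat_top (a : ℕ) (t : List ℕ) :
    ext (t ++ [a]) (t.length + 1) = (a : ℕ∞) := by
  rw [ext_of_mem (by omega) (by simp)]
  congr 1
  simp only [Nat.add_sub_cancel]
  rw [List.getD_eq_getElem _ _ (by simp)]
  exact List.getElem_concat_length (l := t) (a := a) (i := t.length) rfl (by simp)

lemma pinn_concat {a : ℕ} {t : List ℕ} (ht : t ≠ []) (hmax : ∀ x ∈ t, x < a) :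
    pinnSet (t ++ [a]) = pinnSet t := by
  have hL : 1 ≤ t.length := List.length_pos_iff.2 ht
  ext x
  simp only [pinnSet, Finset.mem_image, Finset.mem_filter, Finset.mem_Icc,
    List.length_append, List.length_singleton]
  constructor
  · rintro ⟨i, ⟨⟨hi1, hi2⟩, hp1, hp2⟩, rfl⟩
    rcases (by omega : i = t.length + 1 ∨ i = t.length ∨ (1 ≤ i ∧ i + 1 ≤ t.length))
      with rfl | rfl | ⟨hia, hib⟩
    · rw [ext_of_not (by simp only [List.length_append, List.length_singleton]; omega)] at hp2
      exact absurd hp2 not_top_lt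
    · rw [ext_concat_top, ext_concat le_rfl, ext_of_mem hL le_rfl] at hp2
      have h2 := hmax _ (getD_mem (k := t.length - 1) (by omega))
      have h3 : a < t.getD (t.length - 1) 0 := by exact_mod_cast hp2
      omega
    · refine ⟨i, ⟨⟨hia, by omega⟩, ?_, ?_⟩, (getD_append' a (by omega)).symm⟩
      · rw [← ext_concat (j := i - 1) (by omega), ← ext_concat (j := i) (by omega)]
        exact hp1
      · rw [← ext_concat (j := i + 1) hib, ← ext_concat (j := i) (by omega)]
        exact hp2
  · rintro ⟨j, ⟨⟨hj1, hj2⟩, hp1, hp2⟩, rfl⟩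
    rcases (by omega : j = t.length ∨ j + 1 ≤ t.length) with rfl | hjb
    · rw [ext_of_not (by omega)] at hp2
      exact absurd hp2 not_top_lt
    · refine ⟨j, ⟨⟨hj1, by omega⟩, ?_, ?_⟩, getD_append' a (by omega)⟩
      · rw [ext_concat (j := j - 1) (by omega), ext_concat (j := j) (by omega)]
        exact hp1
      · rw [ext_concat (j := j + 1) hjb, ext_concat (j := j) (by omega)]
        exact hp2

lemma vale_concat {a : ℕ} {t : List ℕ} (ht : t ≠ []) (hmax : ∀ x ∈ t, x < a) :
    valeSet (t ++ [a]) = valeSet t := by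
  have hL : 1 ≤ t.length := List.length_pos_iff.2 ht
  ext x
  simp only [valeSet, Finset.mem_image, Finset.mem_filter, Finset.mem_Icc,
    List.length_append, List.length_singleton]
  constructor
  · rintro ⟨i, ⟨⟨hi1, hi2⟩, hv1, hv2⟩, rfl⟩
    rcases (by omega : i = t.length + 1 ∨ i = t.length ∨ (1 ≤ i ∧ i + 1 ≤ t.length))
      with rfl | rfl | ⟨hia, hib⟩
    · rw [show t.length + 1 - 1 = t.length from rfl, ext_concat_top,
        ext_concat le_rfl, ext_of_mem hL le_rfl] at hv1
      have h2 := hmax _ (getD_mem (k := t.length - 1) (by omega))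
      have h3 : a < t.getD (t.length - 1) 0 := by exact_mod_cast hv1
      omega
    · refine ⟨t.length, ⟨⟨hL, le_rfl⟩, ?_, ?_⟩, (getD_append' a (by omega)).symm⟩
      · rw [← ext_concat (j := t.length - 1) (by omega), ← ext_concat (j := t.length) le_rfl]
        exact hv1
      · rw [ext_of_not (w := t) (i := t.length + 1) (by omega)]
        exact ext_lt_top hL le_rfl
    · refine ⟨i, ⟨⟨hia, by omega⟩, ?_, ?_⟩, (getD_append' a (by omega)).symm⟩
      · rw [← ext_concat (j := i - 1) (by omega), ← ext_concat (j := i) (by omega)]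
        exact hv1
      · rw [← ext_concat (j := i + 1) hib, ← ext_concat (j := i) (by omega)]
        exact hv2
  · rintro ⟨j, ⟨⟨hj1, hj2⟩, hv1, hv2⟩, rfl⟩
    rcases (by omega : j = t.length ∨ j + 1 ≤ t.length) with rfl | hjb
    · refine ⟨t.length, ⟨⟨hL, by omega⟩, ?_, ?_⟩, getD_append' a (by omega)⟩
      · rw [ext_concat (j := t.length - 1) (by omega), ext_concat (j := t.length) le_rfl]
        exact hv1
      · rw [ext_concat (j := t.length) le_rfl, ext_concat_top, ext_of_mem hL le_rfl]
        have h2 := hmax _ (getD_mem (k := t.length - 1) (by omega))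
        exact_mod_cast h2
    · refine ⟨j, ⟨⟨hj1, by omega⟩, ?_, ?_⟩, getD_append' a (by omega)⟩
      · rw [ext_concat (j := j - 1) (by omega), ext_concat (j := j) (by omega)]
        exact hv1
      · rw [ext_concat (j := j + 1) hjb, ext_concat (j := j) (by omega)]
        exact hv2

lemma two_le_length {w : List ℕ} (hne : (pinnSet w).Nonempty) : 2 ≤ w.length := by
  obtain ⟨x, hx⟩ := hne
  simp only [pinnSet, Finset.mem_image, Finset.mem_filter, Finset.mem_Icc] at hx
  obtain ⟨i, ⟨⟨h1, h2⟩, hp1, hp2⟩, _⟩ := hx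
  by_contra h
  push_neg at h
  have hi : i = 1 := by omega
  subst hi
  rw [show (1:ℕ) - 1 = 0 from rfl, ext_zero] at hp1
  exact not_top_lt hp1

lemma vale_lt_some {w : List ℕ} (hlen : 2 ≤ w.length) {v : ℕ} (hv : v ∈ valeSet w) :
    ∃ x ∈ w, v < x := by
  simp only [valeSet, Finset.mem_image, Finset.mem_filter, Finset.mem_Icc] at hv
  obtain ⟨i, ⟨⟨h1, h2⟩, hv1, hv2⟩, rfl⟩ := hv
  rcases (by omega : i = 1 ∨ 2 ≤ i) with rfl | hi2
  · rw [ext_of_mem le_rfl (by omega), ext_of_mem (by omega) (by omega)] at hv2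
    exact ⟨w.getD (2 - 1) 0, getD_mem (by omega), by exact_mod_cast hv2⟩
  · rw [ext_of_mem (by omega) h2, ext_of_mem (by omega) (by omega)] at hv1
    exact ⟨w.getD (i - 1 - 1) 0, getD_mem (by omega), by exact_mod_cast hv1⟩

lemma vale_lt_pinn : ∀ (N : ℕ) (w : List ℕ), w.length ≤ N → w.Nodup →
    ∀ v ∈ valeSet w, (pinnSet w).Nonempty → ∃ p ∈ pinnSet w, v < p := by
  intro N
  induction N with
  | zero =>
    intro w hlen _ v _ hne
    have := two_le_length hne
    omega
  | succ N ih =>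
    intro w hlen hw v hv hne
    have hlen2 : 2 ≤ w.length := two_le_length hne
    obtain ⟨a, t, rfl⟩ : ∃ a t, w = a :: t := by
      cases w with
      | nil => simp at hlen2
      | cons a t => exact ⟨a, t, rfl⟩
    have hlc : (a :: t).length = t.length + 1 := rfl
    have ht : t ≠ [] := by
      intro h; subst h; simp at hlen2
    have hane : (a :: t) ≠ [] := by simp
    have htne : (a :: t).toFinset.Nonempty := ⟨a, by simp⟩
    set M := ((a :: t).toFinset).max' htne with hM
    have hMmem : M ∈ a :: t := List.mem_toFinset.1 (Finset.max'_mem _ htne)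
    have hMmax : ∀ x ∈ a :: t, x ≤ M := fun x hx => Finset.le_max' _ x (List.mem_toFinset.2 hx)
    by_cases hA : a = M
    · have hmax : ∀ x ∈ t, x < a := by
        intro x hx
        have h1 : x ≤ M := hMmax x (List.mem_cons_of_mem a hx)
        have h2 : x ≠ a := fun h => (List.nodup_cons.1 hw).1 (h ▸ hx)
        omega
      rw [pinn_cons ht hmax] at hne ⊢
      rw [vale_cons ht hmax] at hv
      exact ih t (by omega) (List.nodup_cons.1 hw).2 v hv hne
    · by_cases hB : (a :: t).getLast hane = M
      · set t' := (a :: t).dropLast with ht'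
        have hsplit : t' ++ [M] = a :: t := by
          rw [← hB]; exact List.dropLast_append_getLast hane
        have hw' : (t' ++ [M]).Nodup := by rw [hsplit]; exact hw
        have hMt' : M ∉ t' := fun h => (List.nodup_append.1 hw').2.2 M h M (by simp) rfl
        have hmax' : ∀ x ∈ t', x < M := by
          intro x hx
          have hxw : x ∈ a :: t := by rw [← hsplit]; exact List.mem_append_left _ hx
          have h1 := hMmax x hxw
          have h2 : x ≠ M := fun h => hMt' (h ▸ hx)
          omega
        have hlt' : t'.length = t.length := by
          rw [ht']; simp [hlc]
        have ht'ne : t' ≠ [] := by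
          have h0 : 0 < t'.length := by rw [hlt']; exact List.length_pos_iff.2 ht
          exact List.length_pos_iff.1 h0
        rw [← hsplit] at hv hne ⊢
        rw [pinn_concat ht'ne hmax'] at hne ⊢
        rw [vale_concat ht'ne hmax'] at hv
        exact ih t' (by omega) (List.nodup_append.1 hw').1 v hv hne
      · obtain ⟨m, hm, hgm⟩ := List.getElem_of_mem hMmem
        have hm' : m < t.length + 1 := by omega
        have hm0 : m ≠ 0 := by
          intro h; subst h
          exact hA (by simpa using hgm)
        have hmlast : m ≠ t.length := by
          intro h
          apply hB
          rw [List.getLast_eq_getElem]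
          have : (a :: t).length - 1 = m := by omega
          simp_rw [this]
          exact hgm
        have key : ∀ k (hk : k < (a :: t).length), k ≠ m → (a :: t)[k] < M := by
          intro k hk hkm
          have hle := hMmax _ (List.getElem_mem hk)
          have hne2 : (a :: t)[k] ≠ M := by
            intro h
            rw [← hgm] at h
            exact hkm ((List.Nodup.getElem_inj_iff hw).1 h)
          omega
        have hMp : M ∈ pinnSet (a :: t) := by
          simp only [pinnSet, Finset.mem_image, Finset.mem_filter, Finset.mem_Icc]
          refine ⟨m + 1, ⟨⟨by omega, by omega⟩, ?_, ?_⟩, ?_⟩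
          · show ext (a :: t) m < ext (a :: t) (m + 1)
            rw [ext_of_mem' (by omega) (by omega), ext_of_mem' (by omega) (by omega)]
            rw [Nat.cast_lt]
            have e : (a :: t)[m + 1 - 1]'(by omega) = M := hgm
            rw [e]
            exact key (m - 1) (by omega) (by omega)
          · show ext (a :: t) (m + 1 + 1) < ext (a :: t) (m + 1)
            rw [ext_of_mem' (by omega) (by omega), ext_of_mem' (by omega) (by omega)]
            rw [Nat.cast_lt]
            have e : (a :: t)[m + 1 - 1]'(by omega) = M := hgm
            rw [e]
            exact key (m + 1 + 1 - 1) (by omega) (by omega)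
          · rw [List.getD_eq_getElem _ _ (by omega)]
            exact hgm
        have hvM : v < M := by
          obtain ⟨x, hx, hvx⟩ := vale_lt_some hlen2 hv
          exact lt_of_lt_of_le hvx (hMmax x hx)
        exact ⟨M, hMp, hvM⟩


lemma card_filter_image {w : List ℕ} (hw : w.Nodup) (P : ℕ → Prop) [DecidablePred P] :
    (((Finset.Icc 1 w.length).filter P).image fun i => w.getD (i - 1) 0).card
      = ((Finset.Icc 1 w.length).filter P).card := by
  apply Finset.card_image_of_injOn
  intro i hi j hj hij
  simp only [Finset.coe_filter, Set.mem_setOf_eq, Finset.mem_Icc] at hi hj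
  simp only at hij
  rw [List.getD_eq_getElem w 0 (show i - 1 < w.length by omega),
    List.getD_eq_getElem w 0 (show j - 1 < w.length by omega)] at hij
  have := (List.Nodup.getElem_inj_iff hw).1 hij
  omega

/-- Lemma 4.2(f): if `π ∈ S_n` has pinnacle set `P ≠ ∅` and vale
set `V`, then `N_PV(p_ℓ) = 2` for the largest pinnacle `p_ℓ`. -/
theorem nPV_max_pinnacle (n : ℕ) (π : List ℕ) (hπ : IsPermOf n π) (P V : Finset ℕ)
    (hP : pinnSet π = P) (hV : valeSet π = V) (hne : P.Nonempty) :
    nPVZ P V (P.max' hne) = 2 := by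
  subst hP hV
  have hw : π.Nodup := hπ.nodup_iff.2 (List.nodup_range' (s := 1) (n := n) 1 one_pos)
  have hlen2 : 2 ≤ π.length := two_le_length hne
  set pl := (pinnSet π).max' hne with hpl
  have hVfilter : (valeSet π).filter (fun v => v < pl) = valeSet π := by
    apply Finset.filter_eq_self.2
    intro v hv
    obtain ⟨p, hp, hvp⟩ := vale_lt_pinn π.length π le_rfl hw v hv hne
    exact lt_of_lt_of_le hvp (Finset.le_max' _ p hp)
  have hPfilter : (pinnSet π).filter (fun p => p < pl) = (pinnSet π).erase pl := by
    ext x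
    simp only [Finset.mem_filter, Finset.mem_erase]
    constructor
    · rintro ⟨hx, hlt⟩; exact ⟨ne_of_lt hlt, hx⟩
    · rintro ⟨hne2, hx⟩
      exact ⟨hx, lt_of_le_of_ne (Finset.le_max' _ x hx) hne2⟩
  have hVc : (valeSet π).card = (vIdx π).card := card_filter_image hw _
  have hPc : (pinnSet π).card = (pIdx π).card := card_filter_image hw _
  have hcards : ((vIdx π).card : ℤ) = (pIdx π).card + 1 := card_vIdx_pIdx hw (by omega)
  have hPe : ((pinnSet π).erase pl).card + 1 = (pinnSet π).card :=
    Finset.card_erase_add_one (Finset.max'_mem _ hne)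
  simp only [nPVZ]
  rw [hVfilter, hPfilter]
  omega
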